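/- Inference is invariant under invertible affine transformations: let f : ℝ^d → ℝ^d be an invertible affine map, h a linear separator on ℝ^d, S ⊆ ℝ^d a finite set, and z ∈ ℝ^d. Then the composition h ∘ f is a linear separator on ℝ^d, and S →_{h∘f} z if and only if f(S) →_h f(z). -/
import Mathlib


open MeasureTheory
open scoped RealInnerProductSpace ENNReal

noncomputable section

/-- `d`-dimensional Euclidean space. -/
abbrev Euc (d : ℕ) := EuclideanSpace ℝ (Fin d)

/-- A linear separator on `ℝ^d`: a function of the form `x ↦ ⟪v, x⟫ + b`. -/
def IsLinSep {d : ℕ} (h : Euc d → ℝ) : Prop :=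
  ∃ (v : Euc d) (b : ℝ), ∀ x, h x = ⟪v, x⟫ + b

/-- `h'` is query-consistent with `h` on `S`: all label queries and all
comparison queries on `S` agree. -/
def QueryConsistent {d : ℕ} (h h' : Euc d → ℝ) (S : Set (Euc d)) : Prop :=
  (∀ x ∈ S, Real.sign (h' x) = Real.sign (h x)) ∧
  (∀ x ∈ S, ∀ y ∈ S, Real.sign (h' x - h' y) = Real.sign (h x - h y))

/-- `S` infers `z` under `h` (written `S →ₕ z`): every linear separator that is
query-consistent with `h` on `S` assigns `z` the same label as `h`. -/
def Infers {d : ℕ} (h : Euc d → ℝ) (S : Set (Euc d)) (z : Euc d) : Prop :=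
  ∀ h' : Euc d → ℝ, IsLinSep h' → QueryConsistent h h' S →
    Real.sign (h' z) = Real.sign (h z)

/-- The `(c1, c2)`-conditions on a distribution `D` over `ℝ^d`:
concentration of the norm and anti-concentration of one-dimensional marginals. -/
def Conditions {d : ℕ} (D : Measure (Euc d)) (c1 c2 : ℝ) : Prop :=
  (∀ α : ℝ, 0 < α → D {x | (d : ℝ) * α < ‖x‖} ≤ ENNReal.ofReal (c1 / α)) ∧
  (∀ α : ℝ, 0 < α → ∀ v : Euc d, ‖v‖ = 1 → ∀ b : ℝ,
      D {x | |⟪v, x⟫ + b| ≤ α} ≤ ENNReal.ofReal (c2 * α))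


lemma comp_linsep {d : ℕ} (f : Euc d ≃ᵃ[ℝ] Euc d) (h : Euc d → ℝ) (hh : IsLinSep h) :
    IsLinSep (h ∘ f) := by
  obtain ⟨v, b, hv⟩ := hh
  set L : Euc d →ₗ[ℝ] Euc d := (f.linear : Euc d →ₗ[ℝ] Euc d) with hL
  refine ⟨L.adjoint v, b + ⟪v, f 0⟫, fun x => ?_⟩
  have hfx : f x = L x + f 0 := by
    have h2 := f.toAffineMap.linearMap_vsub x 0
    simp only [vsub_eq_sub, sub_zero] at h2
    have : L x = f x - f 0 := by rw [hL]; exact_mod_cast h2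
    rw [this]; abel
  calc (h ∘ f) x = ⟪v, L x + f 0⟫ + b := by rw [Function.comp, hv, hfx]
    _ = _ := by rw [inner_add_right, LinearMap.adjoint_inner_left]; ring

/-- Inference is invariant under invertible affine transformations. -/

theorem stmt7 (d : ℕ) (f : Euc d ≃ᵃ[ℝ] Euc d) (h : Euc d → ℝ) (hh : IsLinSep h)
    (S : Set (Euc d)) (hS : S.Finite) (z : Euc d) :
    IsLinSep (h ∘ f) ∧ (Infers (h ∘ f) S z ↔ Infers h (⇑f '' S) (f z)) := by
  refine ⟨comp_linsep f h hh, ?_, ?_⟩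
  · -- forward
    intro hinf h' hls ⟨hq1, hq2⟩
    have := hinf (h' ∘ f) (comp_linsep f h' hls)
      ⟨fun x hx => hq1 (f x) ⟨x, hx, rfl⟩,
       fun x hx y hy => hq2 (f x) ⟨x, hx, rfl⟩ (f y) ⟨y, hy, rfl⟩⟩
    exact this
  · -- backward
    intro hinf h' hls ⟨hq1, hq2⟩
    have key := hinf (h' ∘ f.symm) (comp_linsep f.symm h' hls) ?_
    · simpa using key
    · constructor
      · rintro x ⟨s, hs, rfl⟩
        simpa using hq1 s hs
      · rintro x ⟨s, hs, rfl⟩ y ⟨t, ht, rfl⟩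
        simpa using hq2 s hs t ht
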